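/- Let τ be a unital completely positive map on a von Neumann algebra A with a faithful invariant normal state φ₀, and suppose the dual map τ̃ satisfies φ₀(τ̃(x)y) = φ₀(x τ(y)) (trace-like/symmetric setting). Then the set G = {x ∈ A : τ̃(τ(x)) = x} is a *-subalgebra of A, and τ restricted to G is a *-isomorphism onto G̃ = {x ∈ A : τ(τ̃(x)) = x}. -/

import Mathlib

open ComplexOrder

section Aux

variable {A : Type*} [Ring A] [StarRed : StarRing A] [Algebra ℂ A]
variable [PartialOrder A] [StarOrderedRing A]

/-- an ℂ-module element with `x + x = 0` is zero. -/
private lemma double_zero {x : A} (h : x + x = 0) : x = 0 := by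
  have h2 : (2 : ℂ) • x = 0 := by rw [two_smul]; exact h
  have := congrArg (fun z => (2 : ℂ)⁻¹ • z) h2
  simpa [inv_smul_smul₀ (two_ne_zero' ℂ)] using this

/-- positivity of `φ₀ (b * a)` for central positive `b` and positive `a`. -/
private lemma phi_central_mul_nonneg (φ₀ : A →ₗ[ℂ] ℂ)
    (hφpos : ∀ x : A, 0 ≤ x → 0 ≤ φ₀ x)
    (htrace : ∀ x y : A, φ₀ (x * y) = φ₀ (y * x))
    {b : A} (hb : 0 ≤ b) {a : A} (ha : 0 ≤ a) : 0 ≤ φ₀ (b * a) := by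
  rw [StarOrderedRing.nonneg_iff] at ha
  induction ha using AddSubmonoid.closure_induction with
  | mem x hx =>
      obtain ⟨s, rfl⟩ := hx
      have h1 : φ₀ (b * (star s * s)) = φ₀ (star (star s) * b * star s) := by
        rw [star_star, ← mul_assoc, htrace (b * star s) s, ← mul_assoc]
      rw [h1]
      exact hφpos _ (star_left_conjugate_nonneg hb (star s))
  | zero => simpa using le_refl (0:ℂ)
  | add x y hx hy ihx ihy =>
      rw [mul_add, map_add]
      exact add_nonneg ihx ihy

/-- `star (I • x) = (-I) • star x`, derived from the order structure. -/
private lemma star_I_smul (φ₀ : A →ₗ[ℂ] ℂ)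
    (hφpos : ∀ x : A, 0 ≤ x → 0 ≤ φ₀ x) (hφ1 : φ₀ 1 = 1)
    (hfaithful : ∀ x : A, 0 ≤ x → φ₀ x = 0 → x = 0)
    (htrace : ∀ x y : A, φ₀ (x * y) = φ₀ (y * x)) :
    ∀ x : A, star (Complex.I • x) = (-Complex.I) • star x := by
  set j : A := algebraMap ℂ A Complex.I with hj
  have hjc : ∀ x : A, j * x = x * j := fun x => (Algebra.commutes Complex.I x)
  have hjj : j * j = -1 := by
    rw [hj, ← map_mul, Complex.I_mul_I, map_neg, map_one]
  set k : A := star j with hk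
  have hkc : ∀ x : A, k * x = x * k := by
    intro x
    calc k * x = star (star x * j) := by rw [star_mul, star_star]
    _ = star (j * star x) := by rw [hjc]
    _ = x * k := by rw [star_mul, star_star]
  have hkk : k * k = -1 := by
    rw [hk, ← star_mul, hjj, star_neg, star_one]
  set p : A := k * j with hp
  have hp0 : 0 ≤ p := star_mul_self_nonneg j
  have hpstar : star p = p := by
    rw [hp, star_mul, hk, star_star, ← hjc]
  have hp2 : p * p = 1 := by
    calc p * p = k * (j * k) * j := by rw [hp]; noncomm_ring
    _ = k * (k * j) * j := by rw [hjc k]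
    _ = (k * k) * (j * j) := by noncomm_ring
    _ = 1 := by rw [hjj, hkk]; noncomm_ring
  -- δ := (1-p) + (1-p) = (p-1)*(p-1) ≥ 0
  have hδeq : (p - 1) * (p - 1) = (1 - p) + (1 - p) := by
    have : (p - 1) * (p - 1) = p * p - p - p + 1 := by noncomm_ring
    rw [this, hp2]; abel
  have hδ0 : 0 ≤ (1 - p) + (1 - p) := by
    rw [← hδeq]
    have := star_mul_self_nonneg (p - 1)
    rwa [star_sub, hpstar, star_one] at this
  -- φ₀ (p * δ) ≥ 0 and equals -(t+t)
  have hpδ : 0 ≤ φ₀ (p * ((1 - p) + (1 - p))) :=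
    phi_central_mul_nonneg φ₀ hφpos htrace hp0 hδ0
  have hval : φ₀ (p * ((1 - p) + (1 - p))) = -(φ₀ (1 - p) + φ₀ (1 - p)) := by
    have : p * ((1 - p) + (1 - p)) = (p + p) - (p*p + p*p) := by noncomm_ring
    rw [this, hp2]
    simp only [map_sub, map_add, map_one]
    ring
  have ht0 : 0 ≤ φ₀ (1 - p) + φ₀ (1 - p) := by
    have := hφpos _ hδ0; rwa [map_add] at this
  have ht1 : φ₀ (1 - p) + φ₀ (1 - p) ≤ 0 := by
    rw [hval] at hpδ; exact neg_nonneg.mp hpδ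
  have ht : φ₀ ((1 - p) + (1 - p)) = 0 := by
    rw [map_add]; exact le_antisymm ht1 ht0
  have hδzero : (1 - p) + (1 - p) = 0 := hfaithful _ hδ0 ht
  have hp1 : p = 1 := by
    have := double_zero hδzero
    rw [sub_eq_zero] at this; exact this.symm
  have hkj : k = -j := by
    have hji : j * (-j) = 1 := by rw [mul_neg, hjj, neg_neg]
    calc k = k * (j * (-j)) := by rw [hji, mul_one]
    _ = (k * j) * (-j) := by rw [mul_assoc]
    _ = -j := by rw [← hp, hp1, one_mul]
  intro x
  calc star (Complex.I • x) = star (j * x) := by rw [hj, Algebra.smul_def]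
  _ = star x * k := by rw [star_mul, hk]
  _ = star x * (-j) := by rw [hkj]
  _ = -(j * star x) := by rw [mul_neg, hjc]
  _ = (-Complex.I) • star x := by rw [hj, ← Algebra.smul_def, neg_smul]
end Aux

section Core

variable {A : Type*} [Ring A] [StarRing A] [Algebra ℂ A]
variable [PartialOrder A] [StarOrderedRing A]

private lemma fixed_selfmul (τ τt : A →ₗ[ℂ] A)
    (hτKS : ∀ x : A, τ (star x) * τ x ≤ τ (star x * x))
    (hτtKS : ∀ x : A, τt (star x) * τt x ≤ τt (star x * x))
    (hτstar : ∀ x : A, τ (star x) = star (τ x))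
    (hτtstar : ∀ x : A, τt (star x) = star (τt x))
    (φ₀ : A →ₗ[ℂ] ℂ) (hφpos : ∀ x : A, 0 ≤ x → 0 ≤ φ₀ x)
    (hfaithful : ∀ x : A, 0 ≤ x → φ₀ x = 0 → x = 0)
    (hinvτ : ∀ x : A, φ₀ (τ x) = φ₀ x) (hinvτt : ∀ x : A, φ₀ (τt x) = φ₀ x)
    {z : A} (hz : τt (τ z) = z) :
    τ (star z * z) = star (τ z) * τ z := by
  have h1 : 0 ≤ τ (star z * z) - star (τ z) * τ z :=
    sub_nonneg.mpr (by rw [← hτstar]; exact hτKS z)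
  have h2 : 0 ≤ τt (star (τ z) * τ z) - star z * z := by
    refine sub_nonneg.mpr ?_
    have h := hτtKS (τ z)
    rwa [hτtstar, hz] at h
  have hsum : φ₀ (τ (star z * z) - star (τ z) * τ z)
      + φ₀ (τt (star (τ z) * τ z) - star z * z) = 0 := by
    simp only [map_sub]
    rw [hinvτ, hinvτt]
    ring
  have hd0 : φ₀ (τ (star z * z) - star (τ z) * τ z) = 0 := by
    have ha := hφpos _ h1
    have hb := hφpos _ h2
    have hneg := eq_neg_of_add_eq_zero_left hsum
    exact le_antisymm (hneg ▸ neg_nonpos.mpr hb) ha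
  exact sub_eq_zero.mp (hfaithful _ h1 hd0)

private lemma fixed_mul (τ τt : A →ₗ[ℂ] A)
    (hτKS : ∀ x : A, τ (star x) * τ x ≤ τ (star x * x))
    (hτtKS : ∀ x : A, τt (star x) * τt x ≤ τt (star x * x))
    (hτstar : ∀ x : A, τ (star x) = star (τ x))
    (hτtstar : ∀ x : A, τt (star x) = star (τt x))
    (φ₀ : A →ₗ[ℂ] ℂ) (hφpos : ∀ x : A, 0 ≤ x → 0 ≤ φ₀ x)
    (hfaithful : ∀ x : A, 0 ≤ x → φ₀ x = 0 → x = 0)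
    (hinvτ : ∀ x : A, φ₀ (τ x) = φ₀ x) (hinvτt : ∀ x : A, φ₀ (τt x) = φ₀ x)
    (hsI : ∀ x : A, star (Complex.I • x) = (-Complex.I) • star x) :
    ∀ x y : A, τt (τ x) = x → τt (τ y) = y → τ (x * y) = τ x * τ y := by
  have S : ∀ z : A, τt (τ z) = z → τ (star z * z) = star (τ z) * τ z :=
    fun z hz => fixed_selfmul τ τt hτKS hτtKS hτstar hτtstar φ₀ hφpos hfaithful hinvτ hinvτt hz
  have expand : ∀ u v : A, (star u + (-Complex.I) • star v) * (u + Complex.I • v)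
      = star u * u + Complex.I • (star u * v) + (-Complex.I) • (star v * u) + star v * v := by
    intro u v
    simp only [add_mul, mul_add, smul_mul_assoc, mul_smul_comm]
    match_scalars <;> simp [Complex.I_sq] <;> ring
  have key : ∀ x y : A, τt (τ x) = x → τt (τ y) = y →
      τ (star x * y) = star (τ x) * τ y := by
    intro x y hx hy
    have hxy : τt (τ (x + y)) = x + y := by rw [map_add, map_add, hx, hy]
    have hxIy : τt (τ (x + Complex.I • y)) = x + Complex.I • y := by
      rw [map_add, map_add, hx, map_smul, map_smul, hy]
    have hSx := S x hx
    have hSy := S y hy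
    -- first polarization identity
    have h1' : τ (star x * x) + τ (star x * y) + τ (star y * x) + τ (star y * y)
        = star (τ x) * τ x + star (τ x) * τ y + star (τ y) * τ x + star (τ y) * τ y := by
      have l : star (x + y) * (x + y)
          = star x * x + star x * y + star y * x + star y * y := by
        rw [star_add]; noncomm_ring
      have r : star (τ (x + y)) * τ (x + y)
          = star (τ x) * τ x + star (τ x) * τ y + star (τ y) * τ x + star (τ y) * τ y := by
        rw [map_add, star_add]; noncomm_ring
      calc τ (star x * x) + τ (star x * y) + τ (star y * x) + τ (star y * y)
          = τ (star (x + y) * (x + y)) := by rw [l, map_add, map_add, map_add]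
        _ = star (τ (x + y)) * τ (x + y) := S (x + y) hxy
        _ = _ := r
    have e1 : τ (star x * y) + τ (star y * x)
        = star (τ x) * τ y + star (τ y) * τ x := by
      have h0 := sub_eq_zero_of_eq h1'
      refine sub_eq_zero.mp ?_
      calc (τ (star x * y) + τ (star y * x)) - (star (τ x) * τ y + star (τ y) * τ x)
          = (τ (star x * x) + τ (star x * y) + τ (star y * x) + τ (star y * y))
            - (star (τ x) * τ x + star (τ x) * τ y + star (τ y) * τ x + star (τ y) * τ y) := by
            rw [hSx, hSy]; abel
        _ = 0 := h0
    -- second polarization identity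
    have h2' : τ (star x * x) + Complex.I • τ (star x * y)
          + (-Complex.I) • τ (star y * x) + τ (star y * y)
        = star (τ x) * τ x + Complex.I • (star (τ x) * τ y)
          + (-Complex.I) • (star (τ y) * τ x) + star (τ y) * τ y := by
      have l : star (x + Complex.I • y) * (x + Complex.I • y)
          = star x * x + Complex.I • (star x * y)
            + (-Complex.I) • (star y * x) + star y * y := by
        rw [star_add, hsI]; exact expand x y
      have r : star (τ (x + Complex.I • y)) * τ (x + Complex.I • y)
          = star (τ x) * τ x + Complex.I • (star (τ x) * τ y)
            + (-Complex.I) • (star (τ y) * τ x) + star (τ y) * τ y := by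
        rw [map_add, map_smul, star_add, hsI]; exact expand (τ x) (τ y)
      calc τ (star x * x) + Complex.I • τ (star x * y)
            + (-Complex.I) • τ (star y * x) + τ (star y * y)
          = τ (star (x + Complex.I • y) * (x + Complex.I • y)) := by
            rw [l, map_add, map_add, map_add, map_smul, map_smul]
        _ = star (τ (x + Complex.I • y)) * τ (x + Complex.I • y) := S _ hxIy
        _ = _ := r
    have e2 : Complex.I • τ (star x * y) + (-Complex.I) • τ (star y * x)
        = Complex.I • (star (τ x) * τ y) + (-Complex.I) • (star (τ y) * τ x) := by
      have h0 := sub_eq_zero_of_eq h2'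
      refine sub_eq_zero.mp ?_
      calc (Complex.I • τ (star x * y) + (-Complex.I) • τ (star y * x))
            - (Complex.I • (star (τ x) * τ y) + (-Complex.I) • (star (τ y) * τ x))
          = (τ (star x * x) + Complex.I • τ (star x * y)
              + (-Complex.I) • τ (star y * x) + τ (star y * y))
            - (star (τ x) * τ x + Complex.I • (star (τ x) * τ y)
              + (-Complex.I) • (star (τ y) * τ x) + star (τ y) * τ y) := by
            rw [hSx, hSy]; abel
        _ = 0 := h0
    -- combine: cancel the antisymmetric part
    have h3 : Complex.I • τ (star x * y) + Complex.I • τ (star y * x)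
        = Complex.I • (star (τ x) * τ y) + Complex.I • (star (τ y) * τ x) := by
      have := congrArg (fun z => Complex.I • z) e1
      simpa [smul_add] using this
    have hs2 : ∀ z : A, (2 * Complex.I) • z = Complex.I • z - (-Complex.I) • z := by
      intro z
      rw [show (2 * Complex.I) = Complex.I - (-Complex.I) by ring, sub_smul]
    have hb : (2 * Complex.I) • τ (star y * x) = (2 * Complex.I) • (star (τ y) * τ x) := by
      have d3 := sub_eq_zero_of_eq h3
      have d2 := sub_eq_zero_of_eq e2
      refine eq_of_sub_eq_zero ?_
      calc (2 * Complex.I) • τ (star y * x) - (2 * Complex.I) • (star (τ y) * τ x)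
          = (Complex.I • τ (star y * x) - (-Complex.I) • τ (star y * x))
            - (Complex.I • (star (τ y) * τ x) - (-Complex.I) • (star (τ y) * τ x)) := by
            rw [hs2, hs2]
        _ = ((Complex.I • τ (star x * y) + Complex.I • τ (star y * x))
              - (Complex.I • (star (τ x) * τ y) + Complex.I • (star (τ y) * τ x)))
            - ((Complex.I • τ (star x * y) + (-Complex.I) • τ (star y * x))
              - (Complex.I • (star (τ x) * τ y) + (-Complex.I) • (star (τ y) * τ x))) := by
            abel
        _ = 0 := by rw [d3, d2, sub_zero]
    have hbb : τ (star y * x) = star (τ y) * τ x := by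
      have h2I : (2 * Complex.I) ≠ 0 := mul_ne_zero two_ne_zero Complex.I_ne_zero
      have h' : (2 * Complex.I)⁻¹ • ((2 * Complex.I) • τ (star y * x))
          = (2 * Complex.I)⁻¹ • ((2 * Complex.I) • (star (τ y) * τ x)) := by rw [hb]
      rwa [inv_smul_smul₀ h2I, inv_smul_smul₀ h2I] at h'
    rw [hbb] at e1
    exact add_right_cancel e1
  intro x y hx hy
  have hstarx : τt (τ (star x)) = star x := by rw [hτstar, hτtstar, hx]
  calc τ (x * y) = τ (star (star x) * y) := by rw [star_star]
    _ = star (τ (star x)) * τ y := key (star x) y hstarx hy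
    _ = τ x * τ y := by rw [hτstar, star_star]

end Core

/-- for a unital completely positive (Kadison–Schwarz) map `τ` with
faithful invariant (tracial) normal state `φ₀` and GNS-adjoint `τ̃`, the set
`G = {x | τ̃ (τ x) = x}` is a *-subalgebra and `τ` restricts to a *-isomorphism
from `G` onto `G̃ = {x | τ (τ̃ x) = x}`. -/
theorem fixed_algebra_of_adjoint_pair
    {A : Type*} [Ring A] [StarRing A] [Algebra ℂ A]
    [PartialOrder A] [StarOrderedRing A]
    (τ τt : A →ₗ[ℂ] A)
    (hτ1 : τ 1 = 1) (hτt1 : τt 1 = 1)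
    (hτpos : ∀ x : A, 0 ≤ x → 0 ≤ τ x) (hτtpos : ∀ x : A, 0 ≤ x → 0 ≤ τt x)
    (hτKS : ∀ x : A, τ (star x) * τ x ≤ τ (star x * x))
    (hτtKS : ∀ x : A, τt (star x) * τt x ≤ τt (star x * x))
    (hτstar : ∀ x : A, τ (star x) = star (τ x))
    (hτtstar : ∀ x : A, τt (star x) = star (τt x))
    (φ₀ : A →ₗ[ℂ] ℂ) (hφpos : ∀ x : A, 0 ≤ x → 0 ≤ φ₀ x) (hφ1 : φ₀ 1 = 1)
    (hfaithful : ∀ x : A, 0 ≤ x → φ₀ x = 0 → x = 0)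
    (htrace : ∀ x y : A, φ₀ (x * y) = φ₀ (y * x))
    (hinv : ∀ x : A, φ₀ (τ x) = φ₀ x)
    (hadj : ∀ x y : A, φ₀ (τt x * y) = φ₀ (x * τ y)) :
    -- `G = {x | τ̃ (τ x) = x}` is a *-subalgebra:
    (τt (τ (1 : A)) = 1) ∧
    (∀ x y : A, τt (τ x) = x → τt (τ y) = y → τt (τ (x + y)) = x + y) ∧
    (∀ (c : ℂ) (x : A), τt (τ x) = x → τt (τ (c • x)) = c • x) ∧
    (∀ x y : A, τt (τ x) = x → τt (τ y) = y → τt (τ (x * y)) = x * y) ∧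
    (∀ x : A, τt (τ x) = x → τt (τ (star x)) = star x) ∧
    -- `τ` maps `G` into `G̃ = {x | τ (τ̃ x) = x}`, injectively and onto,
    (∀ x : A, τt (τ x) = x → τ (τt (τ x)) = τ x) ∧
    (∀ x y : A, τt (τ x) = x → τt (τ y) = y → τ x = τ y → x = y) ∧
    (∀ y : A, τ (τt y) = y → ∃ x : A, τt (τ x) = x ∧ τ x = y) ∧
    -- and is multiplicative and star-preserving on `G`:
    (∀ x y : A, τt (τ x) = x → τt (τ y) = y → τ (x * y) = τ x * τ y) ∧
    (∀ x : A, τt (τ x) = x → τ (star x) = star (τ x)) := by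
  have hφτt : ∀ x : A, φ₀ (τt x) = φ₀ x := by
    intro x
    have h := hadj x 1
    rwa [hτ1, mul_one, mul_one] at h
  have hsI := star_I_smul φ₀ hφpos hφ1 hfaithful htrace
  have hmulG : ∀ x y : A, τt (τ x) = x → τt (τ y) = y → τ (x * y) = τ x * τ y :=
    fixed_mul τ τt hτKS hτtKS hτstar hτtstar φ₀ hφpos hfaithful hinv hφτt hsI
  have hmulGt : ∀ x y : A, τ (τt x) = x → τ (τt y) = y → τt (x * y) = τt x * τt y :=
    fixed_mul τt τ hτtKS hτKS hτtstar hτstar φ₀ hφpos hfaithful hφτt hinv hsI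
  refine ⟨by rw [hτ1, hτt1], ?_, ?_, ?_, ?_, ?_, ?_, ?_, ?_, ?_⟩
  · intro x y hx hy; rw [map_add, map_add, hx, hy]
  · intro c x hx; rw [map_smul, map_smul, hx]
  · intro x y hx hy
    rw [hmulG x y hx hy, hmulGt (τ x) (τ y) (by rw [hx]) (by rw [hy]), hx, hy]
  · intro x hx; rw [hτstar, hτtstar, hx]
  · intro x hx; rw [hx]
  · intro x y hx hy h; rw [← hx, ← hy, h]
  · intro y hy; exact ⟨τt y, by rw [hy], hy⟩
  · exact hmulG
  · intro x _; exact hτstar x
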